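/- Let 0 < α < n, 1 < r < n/α, 0 < λ < n − αr, 1/q = 1/r − α/(n−λ), and b locally integrable on ℚ_p^n. If the maximal commutator M_{α,b}^p is bounded from the p-adic Morrey space L^{r,λ}(ℚ_p^n) to L^{q,λ}(ℚ_p^n), then b ∈ BMO(ℚ_p^n). -/

import Mathlib

open MeasureTheory ENNReal

/-- The closed `p`-adic ball in `ℚ_p^n` of radius `p^γ` centered at `x`. -/
noncomputable def pBall (p : ℕ) [Fact p.Prime] (n : ℕ) (γ : ℤ) (x : Fin n → ℚ_[p]) :
    Set (Fin n → ℚ_[p]) := Metric.closedBall x ((p : ℝ) ^ γ)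

/-- The `p`-adic fractional maximal function
`M_α^p(f)(x) = sup_γ |B_γ(x)|^{α/n−1} ∫_{B_γ(x)} |f|`. -/
noncomputable def fracMax (p : ℕ) [Fact p.Prime] (n : ℕ)
    [MeasurableSpace (Fin n → ℚ_[p])] (μ : Measure (Fin n → ℚ_[p])) (α : ℝ)
    (f : (Fin n → ℚ_[p]) → ℝ) (x : Fin n → ℚ_[p]) : ENNReal :=
  ⨆ γ : ℤ, μ (pBall p n γ x) ^ (α / n - 1) *
    ∫⁻ y in pBall p n γ x, ENNReal.ofReal |f y| ∂μ

/-- The maximal commutator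
`M_{α,b}^p(f)(x) = sup_γ |B_γ(x)|^{α/n−1} ∫_{B_γ(x)} |b(x)−b(y)||f(y)| dy`. -/
noncomputable def maxComm (p : ℕ) [Fact p.Prime] (n : ℕ)
    [MeasurableSpace (Fin n → ℚ_[p])] (μ : Measure (Fin n → ℚ_[p])) (α : ℝ)
    (b f : (Fin n → ℚ_[p]) → ℝ) (x : Fin n → ℚ_[p]) : ENNReal :=
  ⨆ γ : ℤ, μ (pBall p n γ x) ^ (α / n - 1) *
    ∫⁻ y in pBall p n γ x, ENNReal.ofReal (|b x - b y| * |f y|) ∂μ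

/-- The nonlinear commutator `[b, M_α^p](f) = b · M_α^p(f) − M_α^p(b f)` (as a real
number, via `ENNReal.toReal`). -/
noncomputable def nonlinComm (p : ℕ) [Fact p.Prime] (n : ℕ)
    [MeasurableSpace (Fin n → ℚ_[p])] (μ : Measure (Fin n → ℚ_[p])) (α : ℝ)
    (b f : (Fin n → ℚ_[p]) → ℝ) (x : Fin n → ℚ_[p]) : ℝ :=
  b x * (fracMax p n μ α f x).toReal -
    (fracMax p n μ α (fun y => b y * f y) x).toReal

/-- The local fractional maximal function relative to the ball `B = B_{γ₀}(x₀)`: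
`M_{α,B}^p(b)(y) = sup_{B_γ(y) ⊆ B} |B_γ(y)|^{α/n−1} ∫_{B_γ(y)} |b|`. -/
noncomputable def localFracMax (p : ℕ) [Fact p.Prime] (n : ℕ)
    [MeasurableSpace (Fin n → ℚ_[p])] (μ : Measure (Fin n → ℚ_[p])) (α : ℝ)
    (γ₀ : ℤ) (x₀ : Fin n → ℚ_[p]) (b : (Fin n → ℚ_[p]) → ℝ)
    (y : Fin n → ℚ_[p]) : ENNReal :=
  ⨆ (γ : ℤ) (_ : pBall p n γ y ⊆ pBall p n γ₀ x₀),
    μ (pBall p n γ y) ^ (α / n - 1) *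
      ∫⁻ z in pBall p n γ y, ENNReal.ofReal |b z| ∂μ

/-- The `p`-adic BMO seminorm `sup_B |B|^{−1} ∫_B |b − b_B|`. -/
noncomputable def bmoNorm (p : ℕ) [Fact p.Prime] (n : ℕ)
    [MeasurableSpace (Fin n → ℚ_[p])] (μ : Measure (Fin n → ℚ_[p]))
    (b : (Fin n → ℚ_[p]) → ℝ) : ENNReal :=
  ⨆ (γ : ℤ) (x : Fin n → ℚ_[p]), (μ (pBall p n γ x))⁻¹ *
    ∫⁻ y in pBall p n γ x, ENNReal.ofReal |b y - ⨍ z in pBall p n γ x, b z ∂μ| ∂μ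

/-- The `p`-adic Morrey norm `‖f‖_{L^{r,λ}} = sup_B (|B|^{−λ/n} ∫_B |f|^r)^{1/r}` of a
real-valued function. -/
noncomputable def morreyNorm (p : ℕ) [Fact p.Prime] (n : ℕ)
    [MeasurableSpace (Fin n → ℚ_[p])] (μ : Measure (Fin n → ℚ_[p]))
    (r lam : ℝ) (f : (Fin n → ℚ_[p]) → ℝ) : ENNReal :=
  ⨆ (γ : ℤ) (x : Fin n → ℚ_[p]),
    (μ (pBall p n γ x) ^ (-(lam / n)) *
      ∫⁻ y in pBall p n γ x, ENNReal.ofReal |f y| ^ r ∂μ) ^ (1 / r)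

/-- The `p`-adic Morrey norm of an `ℝ≥0∞`-valued function. -/
noncomputable def morreyNormE (p : ℕ) [Fact p.Prime] (n : ℕ)
    [MeasurableSpace (Fin n → ℚ_[p])] (μ : Measure (Fin n → ℚ_[p]))
    (r lam : ℝ) (g : (Fin n → ℚ_[p]) → ENNReal) : ENNReal :=
  ⨆ (γ : ℤ) (x : Fin n → ℚ_[p]),
    (μ (pBall p n γ x) ^ (-(lam / n)) *
      ∫⁻ y in pBall p n γ x, g y ^ r ∂μ) ^ (1 / r)

/-! ### Auxiliary lemmas -/

instance instUltraPiPadic (p : ℕ) [Fact p.Prime] (n : ℕ) :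
    IsUltrametricDist (Fin n → ℚ_[p]) :=
  ⟨fun x y z => by
    refine (dist_pi_le_iff (le_max_iff.2 (Or.inl dist_nonneg))).2 fun i => ?_
    exact (IsUltrametricDist.dist_triangle_max (x i) (y i) (z i)).trans
      (max_le_max (dist_le_pi_dist x y i) (dist_le_pi_dist y z i))⟩

lemma pBall_eq_of_mem {p : ℕ} [Fact p.Prime] {n : ℕ} {γ : ℤ} {x x₀ : Fin n → ℚ_[p]}
    (hx : x ∈ pBall p n γ x₀) : pBall p n γ x = pBall p n γ x₀ :=
  (IsUltrametricDist.closedBall_eq_of_mem hx).symm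

lemma pBall_subset {p : ℕ} [Fact p.Prime] {n : ℕ} {γ γ₀ : ℤ} {x x₀ : Fin n → ℚ_[p]}
    (hγ : γ ≤ γ₀) (hx : x ∈ pBall p n γ₀ x₀) : pBall p n γ x ⊆ pBall p n γ₀ x₀ := by
  have hp1 : (1:ℝ) ≤ (p:ℝ) := by exact_mod_cast (Fact.out : p.Prime).one_lt.le
  refine (Metric.closedBall_subset_closedBall (zpow_le_zpow_right₀ hp1 hγ)).trans ?_
  rw [show Metric.closedBall x ((p:ℝ)^γ₀) = pBall p n γ₀ x from rfl, pBall_eq_of_mem hx]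

lemma measure_pBall_ne_zero (p : ℕ) [Fact p.Prime] (n : ℕ)
    [MeasurableSpace (Fin n → ℚ_[p])] [BorelSpace (Fin n → ℚ_[p])]
    (μ : Measure (Fin n → ℚ_[p])) [μ.IsAddHaarMeasure] (γ : ℤ) (x : Fin n → ℚ_[p]) :
    μ (pBall p n γ x) ≠ 0 := by
  have hρ : (0:ℝ) < (p:ℝ) ^ γ :=
    zpow_pos (by exact_mod_cast (Fact.out : p.Prime).pos) γ
  refine ne_of_gt (lt_of_lt_of_le ?_ (measure_mono Metric.ball_subset_closedBall))
  exact Metric.isOpen_ball.measure_pos μ (Metric.nonempty_ball.2 hρ)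

lemma measure_pBall_ne_top (p : ℕ) [Fact p.Prime] (n : ℕ)
    [MeasurableSpace (Fin n → ℚ_[p])] [BorelSpace (Fin n → ℚ_[p])]
    (μ : Measure (Fin n → ℚ_[p])) [μ.IsAddHaarMeasure] (γ : ℤ) (x : Fin n → ℚ_[p]) :
    μ (pBall p n γ x) ≠ ⊤ :=
  (isCompact_closedBall x _).measure_lt_top.ne

lemma rpow_ne_top'' {x : ℝ≥0∞} (hx : x ≠ 0) (hx' : x ≠ ⊤) (y : ℝ) : x ^ y ≠ ⊤ := by
  simp [ENNReal.rpow_eq_top_iff, hx, hx']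

lemma rpow_mul_self'' {x : ℝ≥0∞} (hx : x ≠ 0) (hx' : x ≠ ⊤) (a : ℝ) :
    x ^ a * x = x ^ (a + 1) := by
  rw [ENNReal.rpow_add a 1 hx hx', ENNReal.rpow_one]

/-- If `0 < α < n`, `1 < r < n/α`, `0 < λ < n − αr`, `1/q = 1/r − α/(n−λ)`, and the
maximal commutator `M_{α,b}^p` is bounded from the `p`-adic Morrey space `L^{r,λ}(ℚ_p^n)`
to `L^{q,λ}(ℚ_p^n)`, then `b ∈ BMO(ℚ_p^n)`. -/
theorem maxComm_morrey_bounded_implies_bmo (p : ℕ) [Fact p.Prime] (n : ℕ)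
    [MeasurableSpace (Fin n → ℚ_[p])] [BorelSpace (Fin n → ℚ_[p])]
    (μ : Measure (Fin n → ℚ_[p])) [μ.IsAddHaarMeasure]
    (hμ : μ (Metric.closedBall 0 1) = 1)
    (α : ℝ) (hα₀ : 0 < α) (hαn : α < n)
    (b : (Fin n → ℚ_[p]) → ℝ) (hbloc : LocallyIntegrable b μ)
    (r q lam : ℝ) (hr : 1 < r) (hrn : r < n / α)
    (hlam₀ : 0 < lam) (hlam : lam < n - α * r)
    (hq : 1 / q = 1 / r - α / (n - lam))
    (hbound : ∃ C : ENNReal, C ≠ ⊤ ∧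
      ∀ f : (Fin n → ℚ_[p]) → ℝ, Measurable f → morreyNorm p n μ r lam f ≠ ⊤ →
        morreyNormE p n μ q lam (maxComm p n μ α b f) ≤
          C * morreyNorm p n μ r lam f) :
    bmoNorm p n μ b ≠ ⊤ := by
  obtain ⟨C, hCtop, hC⟩ := hbound
  have hr0 : (0:ℝ) < r := lt_trans one_pos hr
  have hn0 : (0:ℝ) < n := lt_trans hα₀ hαn
  have hnl : (0:ℝ) < n - lam := by nlinarith
  have hiq : 0 < 1 / q := by
    rw [hq, sub_pos, div_lt_div_iff₀ hnl hr0]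
    nlinarith
  have hq0 : (0:ℝ) < q := by
    by_contra h
    push_neg at h
    have : 1 / q ≤ 0 := div_nonpos_of_nonneg_of_nonpos zero_le_one h
    linarith
  have hq1 : 1 < q := by
    have h3 : α / (n - lam) > 0 := div_pos hα₀ hnl
    have h4 : 1 / r < 1 := by rw [div_lt_one hr0]; exact hr
    have h2 : 1 / q < 1 := by rw [hq]; linarith
    rwa [div_lt_one hq0] at h2
  have hlamn : (0:ℝ) ≤ 1 - lam / n := by
    have : lam / n < 1 := (div_lt_one hn0).2 (by nlinarith)
    linarith
  refine ne_top_of_le_ne_top hCtop ?_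
  rw [bmoNorm]
  refine iSup_le fun γ₀ => iSup_le fun x₀ => ?_
  set B := pBall p n γ₀ x₀ with hBdef
  have hBm : MeasurableSet B := measurableSet_closedBall
  set ν := μ B with hνdef
  have hν0 : ν ≠ 0 := measure_pBall_ne_zero p n μ γ₀ x₀
  have hνt : ν ≠ ⊤ := measure_pBall_ne_top p n μ γ₀ x₀
  set c := ⨍ z in B, b z ∂μ with hcdef
  set f : (Fin n → ℚ_[p]) → ℝ := B.indicator (fun _ => (1:ℝ)) with hfdef
  have hfm : Measurable f := measurable_const.indicator hBm
  -- Step A : Morrey norm of the indicator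
  have hA : morreyNorm p n μ r lam f ≤ ν ^ ((1 - lam / n) * (1 / r)) := by
    rw [morreyNorm]
    refine iSup_le fun γ' => iSup_le fun x' => ?_
    have hB'0 := measure_pBall_ne_zero p n μ γ' x'
    have hB't := measure_pBall_ne_top p n μ γ' x'
    have hint : ∫⁻ y in pBall p n γ' x', ENNReal.ofReal |f y| ^ r ∂μ
        = μ (B ∩ pBall p n γ' x') := by
      have heq : ∀ y, ENNReal.ofReal |f y| ^ r
          = B.indicator (fun _ => (1:ENNReal)) y := by
        intro y
        by_cases hy : y ∈ B
        · simp [hfdef, Set.indicator_of_mem hy]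
        · simp [hfdef, Set.indicator_of_notMem hy, ENNReal.zero_rpow_of_pos hr0]
      simp_rw [heq]
      rw [lintegral_indicator hBm, setLIntegral_one, Measure.restrict_apply hBm]
    rw [hint]
    have key : μ (pBall p n γ' x') ^ (-(lam / n)) * μ (B ∩ pBall p n γ' x')
        ≤ ν ^ (1 - lam / n) := by
      rcases Set.eq_empty_or_nonempty (B ∩ pBall p n γ' x') with he | ⟨z, hzB, hzB'⟩
      · rw [he, measure_empty, mul_zero]; exact zero_le
      · rcases le_total γ' γ₀ with h | h
        · have hsub : pBall p n γ' x' ⊆ B := by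
            intro w hw
            rw [← pBall_eq_of_mem hzB'] at hw
            exact pBall_subset h hzB hw
          rw [Set.inter_eq_right.2 hsub, rpow_mul_self'' hB'0 hB't, neg_add_eq_sub]
          exact ENNReal.rpow_le_rpow (measure_mono hsub) hlamn
        · have hsub : B ⊆ pBall p n γ' x' := by
            intro w hw
            refine pBall_subset h hzB' ?_
            rw [pBall_eq_of_mem hzB]
            exact hw
          rw [Set.inter_eq_left.2 hsub]
          have h1 : μ (pBall p n γ' x') ^ (-(lam / n)) ≤ ν ^ (-(lam / n)) := by
            rw [ENNReal.rpow_neg, ENNReal.rpow_neg]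
            exact ENNReal.inv_le_inv.2
              (ENNReal.rpow_le_rpow (measure_mono hsub) (by positivity))
          calc μ (pBall p n γ' x') ^ (-(lam / n)) * ν
              ≤ ν ^ (-(lam / n)) * ν := mul_le_mul_left h1 _
            _ = ν ^ (1 - lam / n) := by
                rw [rpow_mul_self'' hν0 hνt, neg_add_eq_sub]
    calc (μ (pBall p n γ' x') ^ (-(lam / n)) * μ (B ∩ pBall p n γ' x')) ^ (1 / r)
        ≤ (ν ^ (1 - lam / n)) ^ (1 / r) := ENNReal.rpow_le_rpow key (by positivity)
      _ = ν ^ ((1 - lam / n) * (1 / r)) := (ENNReal.rpow_mul _ _ _).symm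
  have hfne : morreyNorm p n μ r lam f ≠ ⊤ :=
    ne_top_of_le_ne_top (rpow_ne_top'' hν0 hνt _) hA
  -- Step D : pointwise bound
  have hbint : IntegrableOn b B μ := hbloc.integrableOn_isCompact (isCompact_closedBall _ _)
  have hD : ∀ x ∈ B, ENNReal.ofReal |b x - c| ≤ ν ^ (-(α / n)) * maxComm p n μ α b f x := by
    intro x hx
    have hcint : IntegrableOn (fun _ => b x) B μ :=
      integrableOn_const hνt
    have hgint : IntegrableOn (fun z => |b x - b z|) B μ := (hcint.sub hbint).abs
    have hνr0 : ν.toReal ≠ 0 := ENNReal.toReal_ne_zero.2 ⟨hν0, hνt⟩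
    have hre : |b x - c| ≤ ν.toReal⁻¹ * ∫ z in B, |b x - b z| ∂μ := by
      have h1 : c = ν.toReal⁻¹ • ∫ z in B, b z ∂μ := setAverage_eq μ b B
      have h2 : ∫ z in B, (b x - b z) ∂μ = ν.toReal * b x - ∫ z in B, b z ∂μ := by
        rw [integral_sub hcint hbint, setIntegral_const, smul_eq_mul]; rfl
      have h3 : b x - c = ν.toReal⁻¹ * ∫ z in B, (b x - b z) ∂μ := by
        rw [h1, h2, smul_eq_mul]
        field_simp
      rw [h3, abs_mul, abs_of_nonneg (inv_nonneg.2 ENNReal.toReal_nonneg)]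
      have h4 := norm_integral_le_integral_norm (μ := μ.restrict B) (f := fun z => b x - b z)
      simp only [Real.norm_eq_abs] at h4
      exact mul_le_mul_of_nonneg_left h4 (inv_nonneg.2 ENNReal.toReal_nonneg)
    calc ENNReal.ofReal |b x - c|
        ≤ ENNReal.ofReal (ν.toReal⁻¹ * ∫ z in B, |b x - b z| ∂μ) :=
          ENNReal.ofReal_le_ofReal hre
      _ = ν⁻¹ * ∫⁻ z in B, ENNReal.ofReal |b x - b z| ∂μ := by
          rw [ENNReal.ofReal_mul (inv_nonneg.2 ENNReal.toReal_nonneg),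
            MeasureTheory.ofReal_integral_eq_lintegral_ofReal hgint
              (ae_of_all _ fun z => abs_nonneg _),
            ENNReal.ofReal_inv_of_pos (ENNReal.toReal_pos hν0 hνt),
            ENNReal.ofReal_toReal hνt]
      _ = ν ^ (-(α / n)) * (ν ^ (α / n - 1) * ∫⁻ z in B, ENNReal.ofReal |b x - b z| ∂μ) := by
          rw [← mul_assoc, ← ENNReal.rpow_add _ _ hν0 hνt]
          have : -(α / n) + (α / n - 1) = -1 := by ring
          rw [this, ENNReal.rpow_neg_one]
      _ ≤ ν ^ (-(α / n)) * maxComm p n μ α b f x := by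
          refine mul_le_mul_right ?_ _
          have hBx : pBall p n γ₀ x = B := pBall_eq_of_mem hx
          have hInt : ∫⁻ z in B, ENNReal.ofReal |b x - b z| ∂μ
              = ∫⁻ z in B, ENNReal.ofReal (|b x - b z| * |f z|) ∂μ :=
            setLIntegral_congr_fun hBm (fun z hz => by
              simp [hfdef, Set.indicator_of_mem hz])
          rw [hInt]
          have hsup := le_iSup (fun γ => μ (pBall p n γ x) ^ (α / n - 1) *
            ∫⁻ y in pBall p n γ x, ENNReal.ofReal (|b x - b y| * |f y|) ∂μ) γ₀
          rw [hBx] at hsup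
          exact hsup
  -- notation for the maximal commutator
  set M : (Fin n → ℚ_[p]) → ENNReal := maxComm p n μ α b f with hMdef
  set g : (Fin n → ℚ_[p]) → ENNReal := fun x => ENNReal.ofReal |b x - c| with hgdef
  have hgm : AEMeasurable g μ := by
    have h1 : AEMeasurable b μ := hbloc.aestronglyMeasurable.aemeasurable
    have h2 : AEMeasurable (fun x => |b x - c|) μ :=
      continuous_abs.measurable.comp_aemeasurable (h1.sub aemeasurable_const)
    exact ENNReal.measurable_ofReal.comp_aemeasurable h2
  -- Hölder
  have hexp : 1 / (q / (q - 1)) = 1 - 1 / q := by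
    have : q - 1 ≠ 0 := by linarith
    field_simp
  have hconj : q.HolderConjugate (q / (q - 1)) := Real.HolderConjugate.conjExponent hq1
  have hHold : ∫⁻ x in B, g x ∂μ ≤ (∫⁻ x in B, g x ^ q ∂μ) ^ (1 / q) * ν ^ (1 - 1 / q) := by
    have h := ENNReal.lintegral_mul_le_Lp_mul_Lq (μ.restrict B) hconj hgm.restrict
      (aemeasurable_const (b := (1:ENNReal)))
    simp only [Pi.mul_apply, mul_one] at h
    calc ∫⁻ x in B, g x ∂μ
        ≤ (∫⁻ x in B, g x ^ q ∂μ) ^ (1 / q) *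
            (∫⁻ _ in B, (1:ENNReal) ^ (q / (q - 1)) ∂μ) ^ (1 / (q / (q - 1))) := h
      _ = (∫⁻ x in B, g x ^ q ∂μ) ^ (1 / q) * ν ^ (1 - 1 / q) := by
          rw [hexp]
          congr 2
          simp [setLIntegral_one, hνdef]
  -- Step F
  have hF : ∫⁻ x in B, g x ^ q ∂μ ≤ ν ^ (-(α / n) * q) * ∫⁻ x in B, M x ^ q ∂μ := by
    rw [← lintegral_const_mul' _ _ (rpow_ne_top'' hν0 hνt _)]
    refine lintegral_mono_ae ((ae_restrict_iff' hBm).2 (ae_of_all _ fun x hx => ?_))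
    calc g x ^ q ≤ (ν ^ (-(α / n)) * M x) ^ q :=
          ENNReal.rpow_le_rpow (hD x hx) hq0.le
      _ = ν ^ (-(α / n) * q) * M x ^ q := by
          rw [ENNReal.mul_rpow_of_nonneg _ _ hq0.le, ← ENNReal.rpow_mul]
  -- Step G
  have hG : ∫⁻ x in B, M x ^ q ∂μ
      ≤ ν ^ (lam / n) * (C * ν ^ ((1 - lam / n) * (1 / r))) ^ q := by
    have h1 : (ν ^ (-(lam / n)) * ∫⁻ x in B, M x ^ q ∂μ) ^ (1 / q)
        ≤ C * ν ^ ((1 - lam / n) * (1 / r)) := by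
      refine le_trans ?_ ((hC f hfm hfne).trans (mul_le_mul_right hA C))
      rw [morreyNormE]
      exact le_iSup₂ (f := fun γ x => (μ (pBall p n γ x) ^ (-(lam / n)) *
        ∫⁻ y in pBall p n γ x, M y ^ q ∂μ) ^ (1 / q)) γ₀ x₀
    have h2 := ENNReal.rpow_le_rpow h1 hq0.le
    rw [← ENNReal.rpow_mul, one_div_mul_cancel hq0.ne', ENNReal.rpow_one] at h2
    calc ∫⁻ x in B, M x ^ q ∂μ
        = ν ^ (lam / n) * (ν ^ (-(lam / n)) * ∫⁻ x in B, M x ^ q ∂μ) := by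
          rw [← mul_assoc, ← ENNReal.rpow_add _ _ hν0 hνt, add_neg_cancel,
            ENNReal.rpow_zero, one_mul]
      _ ≤ ν ^ (lam / n) * (C * ν ^ ((1 - lam / n) * (1 / r))) ^ q :=
          mul_le_mul_right h2 _
  -- assemble
  have hchain : ν⁻¹ * ∫⁻ y in B, g y ∂μ
      ≤ ν⁻¹ * ((ν ^ (-(α / n) * q) * (ν ^ (lam / n) *
          (C * ν ^ ((1 - lam / n) * (1 / r))) ^ q)) ^ (1 / q) * ν ^ (1 - 1 / q)) := by
    refine mul_le_mul_right (hHold.trans ?_) _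
    refine mul_le_mul_left (ENNReal.rpow_le_rpow ?_ hiq.le) _
    exact hF.trans (mul_le_mul_right hG _)
  -- final computation
  set e : ℝ := (1 - lam / n) * (1 / r) with hedef
  set s : ℝ := (-(α / n) * q + (lam / n + e * q)) * (1 / q) with hsdef
  have e1 : (C * ν ^ e) ^ q = C ^ q * ν ^ (e * q) := by
    rw [ENNReal.mul_rpow_of_nonneg _ _ hq0.le, ← ENNReal.rpow_mul]
  have hmm : ∀ a b' : ℝ, ν ^ a * ν ^ b' = ν ^ (a + b') :=
    fun a b' => (ENNReal.rpow_add a b' hν0 hνt).symm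
  have e2 : ν ^ (lam / n) * (C ^ q * ν ^ (e * q)) = C ^ q * ν ^ (lam / n + e * q) := by
    rw [← mul_assoc, mul_comm (ν ^ (lam / (n:ℝ))) (C ^ q), mul_assoc, hmm]
  have e3 : ν ^ (-(α / n) * q) * (C ^ q * ν ^ (lam / n + e * q))
      = C ^ q * ν ^ (-(α / n) * q + (lam / n + e * q)) := by
    rw [← mul_assoc, mul_comm (ν ^ (-(α / (n:ℝ)) * q)) (C ^ q), mul_assoc, hmm]
  have e4 : (C ^ q * ν ^ (-(α / n) * q + (lam / n + e * q))) ^ (1 / q) = C * ν ^ s := by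
    rw [ENNReal.mul_rpow_of_nonneg _ _ hiq.le, ← ENNReal.rpow_mul, ← ENNReal.rpow_mul,
      mul_one_div_cancel hq0.ne', ENNReal.rpow_one, hsdef]
  have e5 : ν⁻¹ * (C * ν ^ s * ν ^ (1 - 1 / q)) = C * ν ^ (s + (1 - 1 / q) + -1) := by
    rw [mul_assoc C, hmm, ← ENNReal.rpow_neg_one ν,
      mul_comm (ν ^ (-1 : ℝ)), mul_assoc, hmm]
  have hS : s + (1 - 1 / q) + -1 = 0 := by
    have hsval : s = -(α / n) + (lam / n) * (1 / q) + (1 - lam / n) * (1 / r) := by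
      rw [hsdef, hedef]; field_simp; ring
    rw [hsval, hq]
    field_simp
    ring
  calc ν⁻¹ * ∫⁻ y in B, g y ∂μ
      ≤ ν⁻¹ * ((ν ^ (-(α / n) * q) * (ν ^ (lam / n) * (C * ν ^ e) ^ q)) ^ (1 / q) *
          ν ^ (1 - 1 / q)) := hchain
    _ = C * ν ^ (s + (1 - 1 / q) + -1) := by rw [e1, e2, e3, e4, e5]
    _ = C := by rw [hS, ENNReal.rpow_zero, mul_one]
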